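/- The class S of torsion abelian groups is a Serre subcategory of the category of abelian groups, but the class S ∗ V, where V is the class of reduced abelian groups, is not closed under arbitrary products: the product over ℕ of copies of ℚ/ℤ does not lie in S ∗ V. -/

import Mathlib

/-- An abelian group is reduced if it has no non-zero divisible subgroup. -/
def IsReducedAddGroup (A : Type*) [AddCommGroup A] : Prop :=
  ∀ B : AddSubgroup A, (∀ b ∈ B, ∀ n : ℕ, 0 < n → ∃ c ∈ B, n • c = b) → B = ⊥

/-- The abelian group `ℚ/ℤ`. -/
abbrev QModZ : Type := ℚ ⧸ AddSubgroup.zmultiples (1 : ℚ)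

lemma qmodz_div (q : QModZ) (n : ℕ) (hn : 0 < n) : ∃ c : QModZ, n • c = q := by
  induction q using QuotientAddGroup.induction_on with
  | H r =>
    refine ⟨QuotientAddGroup.mk (r / n), ?_⟩
    rw [← QuotientAddGroup.mk_nsmul]
    congr 1
    have hn' : (n : ℚ) ≠ 0 := by positivity
    rw [nsmul_eq_mul]
    field_simp

lemma x_not_torsion : ¬ IsOfFinAddOrder (fun i : ℕ => (QuotientAddGroup.mk ((1 : ℚ) / (i + 1)) : QModZ)) := by
  rw [isOfFinAddOrder_iff_nsmul_eq_zero]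
  rintro ⟨n, hn, h⟩
  have h2 := congrFun h n
  simp only [Pi.smul_apply, Pi.zero_apply, ← QuotientAddGroup.mk_nsmul] at h2
  rw [QuotientAddGroup.eq_zero_iff, AddSubgroup.mem_zmultiples_iff] at h2
  obtain ⟨k, hk⟩ := h2
  rw [zsmul_eq_mul, mul_one, nsmul_eq_mul] at hk
  have hpos : (0 : ℚ) < (k : ℚ) := by
    rw [hk]
    positivity
  have hlt : (k : ℚ) < 1 := by
    rw [hk, mul_one_div, div_lt_one (by positivity)]
    exact_mod_cast Nat.lt_succ_self n
  have : (0 : ℤ) < k := by exact_mod_cast hpos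
  have : (k : ℚ) ≥ 1 := by exact_mod_cast this
  linarith

theorem stmt16 :
    -- torsion abelian groups are closed under subobjects
    (∀ (X : Type) [AddCommGroup X] (B : AddSubgroup X),
      AddMonoid.IsTorsion X → AddMonoid.IsTorsion B) ∧
    -- closed under quotients
    (∀ (X : Type) [AddCommGroup X] (B : AddSubgroup X),
      AddMonoid.IsTorsion X → AddMonoid.IsTorsion (X ⧸ B)) ∧
    -- closed under extensions
    (∀ (X : Type) [AddCommGroup X] (B : AddSubgroup X),
      AddMonoid.IsTorsion B → AddMonoid.IsTorsion (X ⧸ B) → AddMonoid.IsTorsion X) ∧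
    -- ∏_{i ∈ ℕ} ℚ/ℤ is not an extension of a torsion group by a reduced group
    ¬ ∃ A : AddSubgroup (ℕ → QModZ),
        AddMonoid.IsTorsion A ∧ IsReducedAddGroup ((ℕ → QModZ) ⧸ A) := by
  refine ⟨?_, ?_, ?_, ?_⟩
  · intro X _ B hX b
    obtain ⟨n, hn, h⟩ := (isOfFinAddOrder_iff_nsmul_eq_zero).mp (hX (b : X))
    exact isOfFinAddOrder_iff_nsmul_eq_zero.mpr ⟨n, hn, Subtype.ext (by simpa using h)⟩
  · intro X _ B hX x
    induction x using QuotientAddGroup.induction_on with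
    | H x =>
      obtain ⟨n, hn, h⟩ := (isOfFinAddOrder_iff_nsmul_eq_zero).mp (hX x)
      exact isOfFinAddOrder_iff_nsmul_eq_zero.mpr ⟨n, hn, by
        rw [← QuotientAddGroup.mk_nsmul, h, QuotientAddGroup.mk_zero]⟩
  · intro X _ B hB hQ x
    obtain ⟨n, hn, h⟩ := (isOfFinAddOrder_iff_nsmul_eq_zero).mp (hQ (QuotientAddGroup.mk x))
    rw [← QuotientAddGroup.mk_nsmul] at h
    have hmem : n • x ∈ B := (QuotientAddGroup.eq_zero_iff _).mp h
    obtain ⟨m, hm, h2⟩ := (isOfFinAddOrder_iff_nsmul_eq_zero).mp (hB ⟨n • x, hmem⟩)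
    refine isOfFinAddOrder_iff_nsmul_eq_zero.mpr ⟨m * n, Nat.mul_pos hm hn, ?_⟩
    have := congrArg (Subtype.val) h2
    simpa [mul_smul] using this
  · rintro ⟨A, hA, hred⟩
    -- quotient is divisible, hence trivial by reducedness
    have hdiv : ∀ q : (ℕ → QModZ) ⧸ A, ∀ n : ℕ, 0 < n → ∃ c, n • c = q := by
      intro q n hn
      induction q using QuotientAddGroup.induction_on with
      | H f =>
        choose g hg using fun i => qmodz_div (f i) n hn
        exact ⟨QuotientAddGroup.mk g, by
          rw [← QuotientAddGroup.mk_nsmul]; congr 1; funext i; exact hg i⟩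
    have htop : (⊤ : AddSubgroup ((ℕ → QModZ) ⧸ A)) = ⊥ := by
      apply hred
      intro b _ n hn
      obtain ⟨c, hc⟩ := hdiv b n hn
      exact ⟨c, trivial, hc⟩
    -- so A = ⊤
    have hAtop : ∀ x : ℕ → QModZ, x ∈ A := by
      intro x
      have : (QuotientAddGroup.mk x : (ℕ → QModZ) ⧸ A) = 0 := by
        have : (QuotientAddGroup.mk x : (ℕ → QModZ) ⧸ A) ∈ (⊤ : AddSubgroup _) := trivial
        rw [htop] at this
        simpa using this
      exact (QuotientAddGroup.eq_zero_iff _).mp this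
    set x : ℕ → QModZ := fun i => (QuotientAddGroup.mk ((1 : ℚ) / (i + 1)) : QModZ)
    have hx := hA ⟨x, hAtop x⟩
    apply x_not_torsion
    obtain ⟨n, hn, h⟩ := isOfFinAddOrder_iff_nsmul_eq_zero.mp hx
    refine isOfFinAddOrder_iff_nsmul_eq_zero.mpr ⟨n, hn, ?_⟩
    exact congrArg Subtype.val h
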